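/- Let A be a unital C*-algebra, a, c ∈ A with Im a > 0, Im c > 0. Set r = ‖(Im a)^{-1/2}(a − c)(Im c)^{-1/2}‖. Then every d in the set B(c, 2r) = { d ∈ A : Im d > 0, ‖(Im d)^{-1/2}(d − c)(Im c)^{-1/2}‖ ≤ 2r } satisfies Im d ≥ (2 + 4r²)⁻¹ Im c. -/

import Mathlib

/-- The imaginary part `(x - x*)/(2i)`. -/
noncomputable def cstarIm {A : Type*} [CStarAlgebra A] (x : A) : A :=
  ((2 * Complex.I)⁻¹ : ℂ) • (x - star x)

/-- `x > 0`: positive and invertible. -/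
def posInv {A : Type*} [CStarAlgebra A] [PartialOrder A] (x : A) : Prop :=
  0 ≤ x ∧ IsUnit x

/-- `x^{-1/2}`, via the continuous functional calculus square root. -/
noncomputable def invSqrt {A : Type*} [CStarAlgebra A] [PartialOrder A] [StarOrderedRing A]
    (x : A) : A :=
  Ring.inverse (CFC.sqrt x)

/- STATEMENT 19: for a, c in the noncommutative upper half-plane, with
r = ‖(Im a)^{-1/2}(a - c)(Im c)^{-1/2}‖, every d in the pseudo-hyperbolic ball B(c, 2r)
satisfies Im d ≥ (2 + 4r²)⁻¹ Im c. -/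
section helpers

variable {A : Type*} [CStarAlgebra A] [PartialOrder A] [StarOrderedRing A]

lemma aux_smul_nonneg (t : ℝ) (z : A) (ht : 0 ≤ t) (hz : 0 ≤ z) : 0 ≤ t • z := by
  have h1 : (0:A) ≤ star ((Real.sqrt t) • (1:A)) * z * ((Real.sqrt t) • (1:A)) :=
    star_left_conjugate_nonneg hz _
  have h2 : star ((Real.sqrt t) • (1:A)) * z * ((Real.sqrt t) • (1:A)) = t • z := by
    rw [star_smul, star_one, smul_mul_assoc, one_mul, mul_smul_comm, mul_one, smul_smul,
      star_trivial, Real.mul_self_sqrt ht]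
  rwa [h2] at h1

lemma aux_smul_le (t : ℝ) (x y : A) (ht : 0 ≤ t) (h : x ≤ y) : t • x ≤ t • y := by
  have := aux_smul_nonneg t (y - x) ht (sub_nonneg.2 h)
  rw [smul_sub, sub_nonneg] at this; exact this

lemma aux_isUnit_of_sq {M : Type*} [Monoid M] {p e : M} (hp : p * p = e) (he : IsUnit e) :
    IsUnit p := by
  obtain ⟨u, hu⟩ := he
  have hev : e * ↑u⁻¹ = 1 := by rw [← hu, Units.mul_inv]
  have hve : (↑u⁻¹ : M) * e = 1 := by rw [← hu, Units.inv_mul]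
  have hcomm : p * e = e * p := by rw [← hp, mul_assoc]
  have hcomm' : p * ↑u⁻¹ = ↑u⁻¹ * p := by
    calc p * ↑u⁻¹ = (↑u⁻¹ * e) * p * ↑u⁻¹ := by rw [hve, one_mul]
    _ = ↑u⁻¹ * (e * p) * ↑u⁻¹ := by simp [mul_assoc]
    _ = ↑u⁻¹ * (p * e) * ↑u⁻¹ := by rw [hcomm]
    _ = ↑u⁻¹ * p * (e * ↑u⁻¹) := by simp [mul_assoc]
    _ = ↑u⁻¹ * p := by rw [hev, mul_one]
  refine isUnit_iff_exists.2 ⟨p * ↑u⁻¹, ?_, ?_⟩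
  · rw [← mul_assoc, hp, hev]
  · rw [hcomm', mul_assoc, hp, hve]

lemma aux_star_inverse {p : A} (hsa : IsSelfAdjoint p) (hu : IsUnit p) :
    star (Ring.inverse p) = Ring.inverse p := by
  have h1 : p * Ring.inverse p = 1 := Ring.mul_inverse_cancel p hu
  have h2 : Ring.inverse p * p = 1 := Ring.inverse_mul_cancel p hu
  have h3 : star (Ring.inverse p) * p = 1 := by
    have := congrArg star h1
    rwa [star_mul, star_one, hsa.star_eq] at this
  calc star (Ring.inverse p) = star (Ring.inverse p) * (p * Ring.inverse p) := by
        rw [h1, mul_one]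
    _ = (star (Ring.inverse p) * p) * Ring.inverse p := by rw [mul_assoc]
    _ = Ring.inverse p := by rw [h3, one_mul]

lemma aux_cstarIm_sub (d c : A) : cstarIm (d - c) = cstarIm d - cstarIm c := by
  simp only [cstarIm, star_sub, smul_sub]
  module

lemma aux_two_I_smul (x : A) : ((2 * Complex.I) : ℂ) • cstarIm x = x - star x := by
  rw [cstarIm, smul_smul, mul_inv_cancel₀ (by simp [Complex.I_ne_zero]), one_smul]

end helpers

theorem stmt_19 {A : Type*} [CStarAlgebra A] [PartialOrder A] [StarOrderedRing A]
    (a c : A) (ha : posInv (cstarIm a)) (hc : posInv (cstarIm c))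
    (r : ℝ) (hr : r = ‖invSqrt (cstarIm a) * (a - c) * invSqrt (cstarIm c)‖)
    (d : A) (hd : posInv (cstarIm d))
    (hball : ‖invSqrt (cstarIm d) * (d - c) * invSqrt (cstarIm c)‖ ≤ 2 * r) :
    ((2 + 4 * r ^ 2)⁻¹ : ℝ) • cstarIm c ≤ cstarIm d := by
  have hr0 : 0 ≤ r := hr ▸ norm_nonneg _
  obtain ⟨he0, heU⟩ := hc
  obtain ⟨hf0, hfU⟩ := hd
  set e := cstarIm c with he_def
  set f := cstarIm d with hf_def
  set x := d - c with hx_def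
  set p := CFC.sqrt e with hp_def
  set q := CFC.sqrt f with hq_def
  have hp : p * p = e := CFC.sqrt_mul_sqrt_self e he0
  have hq : q * q = f := CFC.sqrt_mul_sqrt_self f hf0
  have hpU : IsUnit p := aux_isUnit_of_sq hp heU
  have hqU : IsUnit q := aux_isUnit_of_sq hq hfU
  have hp0 : (0:A) ≤ p := CFC.sqrt_nonneg e
  have hq0 : (0:A) ≤ q := CFC.sqrt_nonneg f
  have hpsa : IsSelfAdjoint p := IsSelfAdjoint.of_nonneg hp0
  have hqsa : IsSelfAdjoint q := IsSelfAdjoint.of_nonneg hq0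
  set p' := Ring.inverse p with hp'_def
  set q' := Ring.inverse q with hq'_def
  have hpp' : p * p' = 1 := Ring.mul_inverse_cancel p hpU
  have hp'p : p' * p = 1 := Ring.inverse_mul_cancel p hpU
  have hqq' : q * q' = 1 := Ring.mul_inverse_cancel q hqU
  have hq'q : q' * q = 1 := Ring.inverse_mul_cancel q hqU
  have hp'sa : star p' = p' := aux_star_inverse hpsa hpU
  have hq'sa : star q' = q' := aux_star_inverse hqsa hqU
  have hg : ‖q' * x * p'‖ ≤ 2 * r := hball
  set g := q' * x * p' with hg_def
  -- Step A : star x * (q' * q') * x ≤ (4 r²) • e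
  have hA3 : star g * g ≤ (4 * r ^ 2) • (1 : A) := by
    have hA1 : star g * g ≤ algebraMap ℝ A (‖g‖ ^ 2) :=
      CStarAlgebra.star_mul_le_algebraMap_norm_sq
    have h4 : ‖g‖ ^ 2 ≤ 4 * r ^ 2 := by nlinarith [norm_nonneg g]
    have hA2 : algebraMap ℝ A (‖g‖ ^ 2) ≤ algebraMap ℝ A (4 * r ^ 2) := by
      have hone : (0:A) ≤ 1 := by simpa using star_mul_self_nonneg (1:A)
      have h5 : (0:A) ≤ (4 * r ^ 2 - ‖g‖ ^ 2) • (1:A) :=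
        aux_smul_nonneg _ _ (sub_nonneg.2 h4) hone
      rw [sub_smul] at h5
      rw [Algebra.algebraMap_eq_smul_one, Algebra.algebraMap_eq_smul_one]
      exact sub_nonneg.1 h5
    refine (hA1.trans hA2).trans_eq ?_
    rw [Algebra.algebraMap_eq_smul_one]
  have hA4 := star_left_conjugate_le_conjugate hA3 p
  have hstarg : star g = p' * star x * q' := by
    rw [hg_def, star_mul, star_mul, hp'sa, hq'sa, mul_assoc]
  have hLHS : star p * (star g * g) * p = star x * (q' * q') * x := by
    rw [hpsa.star_eq, hstarg, hg_def]
    calc p * (p' * star x * q' * (q' * x * p')) * p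
        = (p * p') * (star x * (q' * q') * x) * (p' * p) := by
          simp only [mul_assoc]
      _ = star x * (q' * q') * x := by rw [hpp', hp'p, one_mul, mul_one]
  have hRHS : star p * ((4 * r ^ 2) • (1 : A)) * p = (4 * r ^ 2) • e := by
    rw [hpsa.star_eq, mul_smul_comm, smul_mul_assoc, mul_one, hp]
  rw [hLHS, hRHS] at hA4
  -- Step B : positivity of star w * w
  set s : ℝ := 2 + 4 * r ^ 2 with hs_def
  set w := q' * x + ((s : ℂ) * Complex.I) • q with hw_def
  have hw : (0:A) ≤ star w * w := star_mul_self_nonneg w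
  have hfe : f - e = cstarIm x := (aux_cstarIm_sub d c).symm
  have hxs : x - star x = ((2 : ℂ) * Complex.I) • (f - e) := by
    rw [hfe]; exact (aux_two_I_smul x).symm
  have cq1 : ∀ y : A, q' * (q * y) = y := fun y => by rw [← mul_assoc, hq'q, one_mul]
  have cq2 : ∀ y : A, q * (q' * y) = y := fun y => by rw [← mul_assoc, hqq', one_mul]
  have hcross : ((s:ℂ) * Complex.I) • star x + (-((s:ℂ) * Complex.I)) • x
      = (2 * s : ℝ) • (f - e) := by
    have h1 : ((s:ℂ) * Complex.I) • star x + (-((s:ℂ) * Complex.I)) • x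
        = (-((s:ℂ) * Complex.I)) • (x - star x) := by module
    rw [h1, hxs, smul_smul]
    have h2 : (-((s:ℂ) * Complex.I)) * ((2:ℂ) * Complex.I) = ((2 * s : ℝ) : ℂ) := by
      push_cast
      ring_nf
      simp [Complex.I_sq]
    rw [h2, Complex.coe_smul]
  have hsw : star w = star x * q' + (-((s:ℂ) * Complex.I)) • q := by
    rw [hw_def, star_add, star_mul, hq'sa, star_smul, hqsa.star_eq]
    congr 1
    rw [star_mul', Complex.star_def, Complex.conj_I, Complex.conj_ofReal]
    ring_nf
  have hexpand : star w * w
      = star x * (q' * q') * x + (2 * s : ℝ) • (f - e) + ((s ^ 2 : ℝ)) • f := by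
    rw [hsw, hw_def]
    rw [add_mul, mul_add, mul_add, smul_mul_assoc, smul_mul_assoc, mul_smul_comm,
      mul_smul_comm, smul_smul]
    rw [show star x * q' * (q' * x) = star x * (q' * q') * x from by simp only [mul_assoc]]
    rw [show star x * q' * q = star x from by rw [mul_assoc, hq'q, mul_one]]
    rw [cq2, hq]
    rw [show (-((s:ℂ) * Complex.I)) * ((s:ℂ) * Complex.I) = ((s ^ 2 : ℝ) : ℂ) from by
      push_cast; ring_nf; simp [Complex.I_sq]]
    rw [Complex.coe_smul]
    rw [add_assoc, add_assoc, ← add_assoc (((s:ℂ) * Complex.I) • star x), hcross]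
  rw [hexpand] at hw
  -- combine
  have hC : (2 * s) • e ≤ (4 * r ^ 2) • e + (2 * s) • f + (s ^ 2) • f := by
    rw [smul_sub] at hw
    have heq : star x * (q' * q') * x + ((2 * s) • f - (2 * s) • e) + (s ^ 2) • f
        = (star x * (q' * q') * x + (2 * s) • f + (s ^ 2) • f) - (2 * s) • e := by abel
    rw [heq] at hw
    have h6 := sub_nonneg.1 hw
    calc (2 * s) • e ≤ star x * (q' * q') * x + (2 * s) • f + (s ^ 2) • f := h6
      _ ≤ (4 * r ^ 2) • e + (2 * s) • f + (s ^ 2) • f := by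
          exact add_le_add_left (add_le_add_left hA4 _) _
  have hD : ((4 : ℝ) + 4 * r ^ 2) • e ≤ ((2 + 4 * r ^ 2) * (4 + 4 * r ^ 2)) • f := by
    have heq1 : ((4 : ℝ) + 4 * r ^ 2) • e = (2 * s) • e - (4 * r ^ 2) • e := by
      rw [← sub_smul]; congr 1; rw [hs_def]; ring
    have heq2 : ((2 + 4 * r ^ 2) * (4 + 4 * r ^ 2)) • f = (2 * s) • f + (s ^ 2) • f := by
      rw [← add_smul]; congr 1; rw [hs_def]; ring
    rw [heq1, heq2, sub_le_iff_le_add]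
    calc (2 * s) • e ≤ (4 * r ^ 2) • e + (2 * s) • f + (s ^ 2) • f := hC
      _ = (2 * s) • f + (s ^ 2) • f + (4 * r ^ 2) • e := by abel
  have hα : (0:ℝ) < (2 + 4 * r ^ 2) * (4 + 4 * r ^ 2) := by positivity
  have h7 := aux_smul_le (((2 + 4 * r ^ 2) * (4 + 4 * r ^ 2))⁻¹) _ _ (le_of_lt (by positivity)) hD
  rw [smul_smul, smul_smul] at h7
  have e1 : ((2 + 4 * r ^ 2) * (4 + 4 * r ^ 2))⁻¹ * (4 + 4 * r ^ 2) = (2 + 4 * r ^ 2)⁻¹ := by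
    have h8 : (0:ℝ) < 4 + 4 * r ^ 2 := by positivity
    have h9 : (0:ℝ) < 2 + 4 * r ^ 2 := by positivity
    field_simp
  have e2 : ((2 + 4 * r ^ 2) * (4 + 4 * r ^ 2))⁻¹ * ((2 + 4 * r ^ 2) * (4 + 4 * r ^ 2)) = 1 :=
    inv_mul_cancel₀ (ne_of_gt hα)
  rw [e1, e2, one_smul] at h7
  exact h7
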